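/- arXiv:2512.20960 — 4 statements merged into one kernel-verified Lean document; each statement's English description precedes it below -/
import Mathlib

section
/- Let (M,d) be a metric space in which every pairwise distance is at most D (for some D ≥ 0). Fix an integer k ≥ 1, a request sequence σ = (σ_1,…,σ_T) in M, initial server positions, and a real ε > 0. Set b = (2+2ε)/(2+ε) and β = 2(1+ε)·D·(3/2 + log_b k). Then for every k-server schedule S serving σ with total cost C, there exists a k-server schedule S' serving σ with the same initial positions such that (i) the total cost of S' is at most C + 2·D·k·(1 + log_b k), and (ii) every server i satisfies c_i(S') ≤ (1+ε)·C/k + β. -/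
set_option linter.unusedSectionVars false
set_option maxHeartbeats 1000000

/-- A `k`-server schedule `s` serves the request sequence `σ` (with requests at times
`1,…,T`) from initial positions `init`: positions extend the initial positions and at
every time `t ∈ {1,…,T}` some server is at the request point `σ t`. -/
def Serves {M : Type*} [MetricSpace M] {k : ℕ} (T : ℕ) (σ : ℕ → M) (init : Fin k → M)
    (s : Fin k → ℕ → M) : Prop :=
  (∀ i, s i 0 = init i) ∧ ∀ t, 1 ≤ t → t ≤ T → ∃ i, s i t = σ t

/-- Cost of server `i` in schedule `s`: `∑_{t=1}^T d(s i (t-1), s i t)`. -/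
noncomputable def serverCost {M : Type*} [MetricSpace M] {k : ℕ} (T : ℕ)
    (s : Fin k → ℕ → M) (i : Fin k) : ℝ :=
  ∑ t ∈ Finset.Icc 1 T, dist (s i (t - 1)) (s i t)

/-- Total cost of a schedule: sum of all server costs. -/
noncomputable def totalCost {M : Type*} [MetricSpace M] {k : ℕ} (T : ℕ)
    (s : Fin k → ℕ → M) : ℝ :=
  ∑ i, serverCost T s i

namespace OfflineFairAux

open Finset

variable {M : Type*} [MetricSpace M] {k : ℕ}


/-- Swap the suffixes (from time `t₀` on) of servers `p` and `w`. -/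
def swapAt (s : Fin k → ℕ → M) (p w : Fin k) (t₀ : ℕ) : Fin k → ℕ → M :=
  fun q τ => if τ < t₀ then s q τ else s (Equiv.swap p w q) τ

lemma swapAt_p_eval (s : Fin k → ℕ → M) (p w : Fin k) (t₀ τ : ℕ) :
    swapAt s p w t₀ p τ = if τ < t₀ then s p τ else s w τ := by
  unfold swapAt; by_cases h : τ < t₀ <;> simp [h, Equiv.swap_apply_left]

lemma swapAt_w_eval (s : Fin k → ℕ → M) (p w : Fin k) (t₀ τ : ℕ) :
    swapAt s p w t₀ w τ = if τ < t₀ then s w τ else s p τ := by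
  unfold swapAt; by_cases h : τ < t₀ <;> simp [h, Equiv.swap_apply_right]

lemma serverCost_nonneg (T : ℕ) (s : Fin k → ℕ → M) (i : Fin k) :
    0 ≤ serverCost T s i :=
  Finset.sum_nonneg fun _ _ => dist_nonneg

lemma totalCost_nonneg (T : ℕ) (s : Fin k → ℕ → M) : 0 ≤ totalCost T s :=
  Finset.sum_nonneg fun _ _ => serverCost_nonneg _ _ _

lemma serverCost_congr {T : ℕ} {s₁ s₂ : Fin k → ℕ → M} {i : Fin k}
    (h : ∀ τ, τ ≤ T → s₁ i τ = s₂ i τ) : serverCost T s₁ i = serverCost T s₂ i := by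
  unfold serverCost
  refine Finset.sum_congr rfl fun t ht => ?_
  simp only [Finset.mem_Icc] at ht
  rw [h (t-1) (by omega), h t ht.2]

lemma serves_swapAt {T : ℕ} {σ : ℕ → M} {init : Fin k → M} {s : Fin k → ℕ → M}
    (hS : Serves T σ init s) (p w : Fin k) {t₀ : ℕ} (ht₀ : 1 ≤ t₀) :
    Serves T σ init (swapAt s p w t₀) := by
  constructor
  · intro i
    have h0 : (0:ℕ) < t₀ := ht₀
    simp [swapAt, h0, hS.1 i]
  · intro t h1 h2
    obtain ⟨i, hi⟩ := hS.2 t h1 h2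
    by_cases h : t < t₀
    · exact ⟨i, by simp [swapAt, h, hi]⟩
    · exact ⟨Equiv.swap p w i, by simp [swapAt, h, Equiv.swap_apply_self, hi]⟩

lemma swapAt_cost_other {T : ℕ} {s : Fin k → ℕ → M} {p w q : Fin k} {t₀ : ℕ}
    (hqp : q ≠ p) (hqw : q ≠ w) :
    serverCost T (swapAt s p w t₀) q = serverCost T s q :=
  serverCost_congr fun τ _ => by
    unfold swapAt
    by_cases h : τ < t₀ <;> simp [h, Equiv.swap_apply_of_ne_of_ne hqp hqw]

lemma swapAt_cost_top {T : ℕ} {s : Fin k → ℕ → M} {p w : Fin k} :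
    serverCost T (swapAt s p w (T+1)) p = serverCost T s p :=
  serverCost_congr fun τ hτ => by
    rw [swapAt_p_eval, if_pos (by omega)]

lemma sum_ite_le {D : ℝ} (hD : 0 ≤ D) (s : Finset ℕ) (a : ℕ) :
    (∑ t ∈ s, if t = a then D else 0) ≤ D := by
  rw [Finset.sum_ite_eq' s a (fun _ => D)]
  split <;> [exact le_rfl; exact hD]

lemma swapAt_cost_one {D : ℝ} (hD : 0 ≤ D) (hdiam : ∀ x y : M, dist x y ≤ D)
    {T : ℕ} {s : Fin k → ℕ → M} {p w : Fin k} :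
    serverCost T (swapAt s p w 1) p ≤ serverCost T s w + D := by
  have key : ∀ t ∈ Finset.Icc 1 T,
      dist (swapAt s p w 1 p (t-1)) (swapAt s p w 1 p t)
        ≤ dist (s w (t-1)) (s w t) + (if t = 1 then D else 0) := by
    intro t ht
    simp only [Finset.mem_Icc] at ht
    by_cases h1 : t = 1
    · subst h1
      have e0 : swapAt s p w 1 p (1-1) = s p 0 := by
        rw [swapAt_p_eval, if_pos (by omega)]
      have e1 : swapAt s p w 1 p 1 = s w 1 := by
        rw [swapAt_p_eval, if_neg (by omega)]
      rw [e0, e1, if_pos rfl]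
      have h3 := dist_triangle (s p 0) (s w 0) (s w 1)
      have h4 := hdiam (s p 0) (s w 0)
      simp only [Nat.sub_self]
      linarith
    · have e0 : swapAt s p w 1 p (t-1) = s w (t-1) := by
        rw [swapAt_p_eval, if_neg (by omega)]
      have e1 : swapAt s p w 1 p t = s w t := by
        rw [swapAt_p_eval, if_neg (by omega)]
      rw [e0, e1, if_neg h1, add_zero]
  calc serverCost T (swapAt s p w 1) p
      ≤ ∑ t ∈ Finset.Icc 1 T, (dist (s w (t-1)) (s w t) + (if t = 1 then D else 0)) :=
        Finset.sum_le_sum key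
    _ = serverCost T s w + ∑ t ∈ Finset.Icc 1 T, (if t = 1 then D else 0) := by
        rw [Finset.sum_add_distrib]; rfl
    _ ≤ serverCost T s w + D := by
        have := sum_ite_le hD (Finset.Icc 1 T) 1
        linarith



lemma swapAt_cost_step {D : ℝ} (hD : 0 ≤ D) (hdiam : ∀ x y : M, dist x y ≤ D)
    {T : ℕ} {s : Fin k → ℕ → M} {p w : Fin k} {c : ℕ} (hc : 1 ≤ c) :
    serverCost T (swapAt s p w (c+1)) p ≤ serverCost T (swapAt s p w c) p + 2*D := by
  have key : ∀ t ∈ Finset.Icc 1 T,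
      dist (swapAt s p w (c+1) p (t-1)) (swapAt s p w (c+1) p t)
        ≤ dist (swapAt s p w c p (t-1)) (swapAt s p w c p t)
          + ((if t = c then D else 0) + (if t = c+1 then D else 0)) := by
    intro t ht
    simp only [Finset.mem_Icc] at ht
    rcases lt_trichotomy t c with h | h | h
    · have A1 : swapAt s p w (c+1) p (t-1) = s p (t-1) := by
        rw [swapAt_p_eval, if_pos (by omega)]
      have A2 : swapAt s p w (c+1) p t = s p t := by
        rw [swapAt_p_eval, if_pos (by omega)]
      have B1 : swapAt s p w c p (t-1) = s p (t-1) := by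
        rw [swapAt_p_eval, if_pos (by omega)]
      have B2 : swapAt s p w c p t = s p t := by
        rw [swapAt_p_eval, if_pos (by omega)]
      rw [A1, A2, B1, B2, if_neg (by omega), if_neg (by omega)]
      linarith
    · subst h
      have A1 : swapAt s p w (t+1) p (t-1) = s p (t-1) := by
        rw [swapAt_p_eval, if_pos (by omega)]
      have A2 : swapAt s p w (t+1) p t = s p t := by
        rw [swapAt_p_eval, if_pos (by omega)]
      have B1 : swapAt s p w t p (t-1) = s p (t-1) := by
        rw [swapAt_p_eval, if_pos (by omega)]
      have B2 : swapAt s p w t p t = s w t := by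
        rw [swapAt_p_eval, if_neg (by omega)]
      rw [A1, A2, B1, B2, if_pos rfl, if_neg (by omega)]
      have h3 := dist_triangle (s p (t-1)) (s w t) (s p t)
      have h4 := hdiam (s w t) (s p t)
      linarith
    · rcases Nat.eq_or_lt_of_le h with h2 | h2
      · -- t = c+1
        have A1 : swapAt s p w (c+1) p (t-1) = s p (t-1) := by
          rw [swapAt_p_eval, if_pos (by omega)]
        have A2 : swapAt s p w (c+1) p t = s w t := by
          rw [swapAt_p_eval, if_neg (by omega)]
        have B1 : swapAt s p w c p (t-1) = s w (t-1) := by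
          rw [swapAt_p_eval, if_neg (by omega)]
        have B2 : swapAt s p w c p t = s w t := by
          rw [swapAt_p_eval, if_neg (by omega)]
        rw [A1, A2, B1, B2, if_neg (by omega), if_pos (by omega)]
        have e : t - 1 = c := by omega
        rw [e]
        have h3 := dist_triangle (s p c) (s w c) (s w t)
        have h4 := hdiam (s p c) (s w c)
        linarith
      · -- t ≥ c+2
        have A1 : swapAt s p w (c+1) p (t-1) = s w (t-1) := by
          rw [swapAt_p_eval, if_neg (by omega)]
        have A2 : swapAt s p w (c+1) p t = s w t := by
          rw [swapAt_p_eval, if_neg (by omega)]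
        have B1 : swapAt s p w c p (t-1) = s w (t-1) := by
          rw [swapAt_p_eval, if_neg (by omega)]
        have B2 : swapAt s p w c p t = s w t := by
          rw [swapAt_p_eval, if_neg (by omega)]
        rw [A1, A2, B1, B2, if_neg (by omega), if_neg (by omega)]
        linarith
  calc serverCost T (swapAt s p w (c+1)) p
      ≤ ∑ t ∈ Finset.Icc 1 T,
          (dist (swapAt s p w c p (t-1)) (swapAt s p w c p t)
            + ((if t = c then D else 0) + (if t = c+1 then D else 0))) :=
        Finset.sum_le_sum key
    _ = serverCost T (swapAt s p w c) p
        + (∑ t ∈ Finset.Icc 1 T, ((if t = c then D else 0) + (if t = c+1 then D else 0))) := by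
        rw [Finset.sum_add_distrib]; rfl
    _ ≤ serverCost T (swapAt s p w c) p + 2*D := by
        rw [Finset.sum_add_distrib]
        have h1 := sum_ite_le hD (Finset.Icc 1 T) c
        have h2 := sum_ite_le hD (Finset.Icc 1 T) (c+1)
        linarith

lemma swapAt_cost_pair {D : ℝ} (hD : 0 ≤ D) (hdiam : ∀ x y : M, dist x y ≤ D)
    {T : ℕ} {s : Fin k → ℕ → M} {p w : Fin k} {t₀ : ℕ} (ht₀ : 1 ≤ t₀) :
    serverCost T (swapAt s p w t₀) p + serverCost T (swapAt s p w t₀) w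
      ≤ serverCost T s p + serverCost T s w + 2*D := by
  have key : ∀ t ∈ Finset.Icc 1 T,
      dist (swapAt s p w t₀ p (t-1)) (swapAt s p w t₀ p t)
        + dist (swapAt s p w t₀ w (t-1)) (swapAt s p w t₀ w t)
      ≤ (dist (s p (t-1)) (s p t) + dist (s w (t-1)) (s w t))
        + (if t = t₀ then 2*D else 0) := by
    intro t ht
    simp only [Finset.mem_Icc] at ht
    rcases lt_trichotomy t t₀ with h | h | h
    · have A1 : swapAt s p w t₀ p (t-1) = s p (t-1) := by
        rw [swapAt_p_eval, if_pos (by omega)]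
      have A2 : swapAt s p w t₀ p t = s p t := by
        rw [swapAt_p_eval, if_pos (by omega)]
      have B1 : swapAt s p w t₀ w (t-1) = s w (t-1) := by
        rw [swapAt_w_eval, if_pos (by omega)]
      have B2 : swapAt s p w t₀ w t = s w t := by
        rw [swapAt_w_eval, if_pos (by omega)]
      rw [A1, A2, B1, B2, if_neg (by omega)]
      linarith
    · subst h
      have A1 : swapAt s p w t p (t-1) = s p (t-1) := by
        rw [swapAt_p_eval, if_pos (by omega)]
      have A2 : swapAt s p w t p t = s w t := by
        rw [swapAt_p_eval, if_neg (by omega)]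
      have B1 : swapAt s p w t w (t-1) = s w (t-1) := by
        rw [swapAt_w_eval, if_pos (by omega)]
      have B2 : swapAt s p w t w t = s p t := by
        rw [swapAt_w_eval, if_neg (by omega)]
      rw [A1, A2, B1, B2, if_pos rfl]
      have h1 := hdiam (s p (t-1)) (s w t)
      have h2 := hdiam (s w (t-1)) (s p t)
      have h3 := dist_nonneg (x := s p (t-1)) (y := s p t)
      have h4 := dist_nonneg (x := s w (t-1)) (y := s w t)
      linarith
    · have A1 : swapAt s p w t₀ p (t-1) = s w (t-1) := by
        rw [swapAt_p_eval, if_neg (by omega)]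
      have A2 : swapAt s p w t₀ p t = s w t := by
        rw [swapAt_p_eval, if_neg (by omega)]
      have B1 : swapAt s p w t₀ w (t-1) = s p (t-1) := by
        rw [swapAt_w_eval, if_neg (by omega)]
      have B2 : swapAt s p w t₀ w t = s p t := by
        rw [swapAt_w_eval, if_neg (by omega)]
      rw [A1, A2, B1, B2, if_neg (by omega)]
      linarith
  have expand : serverCost T (swapAt s p w t₀) p + serverCost T (swapAt s p w t₀) w
      = ∑ t ∈ Finset.Icc 1 T,
          (dist (swapAt s p w t₀ p (t-1)) (swapAt s p w t₀ p t)
            + dist (swapAt s p w t₀ w (t-1)) (swapAt s p w t₀ w t)) := by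
    rw [Finset.sum_add_distrib]; rfl
  rw [expand]
  calc _ ≤ ∑ t ∈ Finset.Icc 1 T,
        ((dist (s p (t-1)) (s p t) + dist (s w (t-1)) (s w t))
          + (if t = t₀ then 2*D else 0)) := Finset.sum_le_sum key
    _ = (serverCost T s p + serverCost T s w)
        + ∑ t ∈ Finset.Icc 1 T, (if t = t₀ then 2*D else 0) := by
        rw [Finset.sum_add_distrib, Finset.sum_add_distrib]; rfl
    _ ≤ serverCost T s p + serverCost T s w + 2*D := by
        have := sum_ite_le (by linarith : (0:ℝ) ≤ 2*D) (Finset.Icc 1 T) t₀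
        linarith



/-- harmonic sum bound -/
lemma harmonic_le : ∀ (m : ℕ), 1 ≤ m → (∑ j ∈ Icc 1 m, (1:ℝ)/(j:ℝ)) ≤ 1 + Real.log m := by
  intro m
  induction m with
  | zero => omega
  | succ m ih =>
    intro _
    by_cases hm : 1 ≤ m
    · have hstep : (1:ℝ)/((m:ℝ)+1) ≤ Real.log ((m:ℝ)+1) - Real.log (m:ℝ) := by
        have hmpos : (0:ℝ) < (m:ℝ) := by exact_mod_cast hm
        have hm1pos : (0:ℝ) < (m:ℝ)+1 := by linarith
        have hq : (0:ℝ) < (m:ℝ)/((m:ℝ)+1) := by positivity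
        have h1 := Real.log_le_sub_one_of_pos hq
        rw [Real.log_div (ne_of_gt hmpos) (ne_of_gt hm1pos)] at h1
        have h2 : (m:ℝ)/((m:ℝ)+1) - 1 = -(1/((m:ℝ)+1)) := by field_simp; ring
        linarith
      have hsum := Finset.sum_Icc_succ_top (by omega : 1 ≤ m + 1) (fun j => (1:ℝ)/(j:ℝ))
      rw [hsum]
      have := ih hm
      push_cast
      push_cast at this
      linarith
    · have hm0 : m = 0 := by omega
      subst hm0
      norm_num

/-- threshold function -/
noncomputable def Gf (A₀ D : ℝ) (k m : ℕ) : ℝ :=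
  A₀ + 4*D*∑ j ∈ Finset.Ico m k, (1:ℝ)/(j:ℝ)

lemma Gf_le_one {A₀ D : ℝ} (hD : 0 ≤ D) {m : ℕ} (hm : 1 ≤ m) :
    Gf A₀ D k m ≤ Gf A₀ D k 1 := by
  unfold Gf
  have hsub : Finset.Ico m k ⊆ Finset.Ico 1 k := by
    apply Finset.Ico_subset_Ico hm le_rfl
  have hs : (∑ j ∈ Finset.Ico m k, (1:ℝ)/(j:ℝ)) ≤ ∑ j ∈ Finset.Ico 1 k, (1:ℝ)/(j:ℝ) :=
    Finset.sum_le_sum_of_subset_of_nonneg hsub (fun j _ _ => by positivity)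
  nlinarith [hs]

lemma Gf_nonneg {A₀ D : ℝ} (hA₀ : 0 ≤ A₀) (hD : 0 ≤ D) (m : ℕ) : 0 ≤ Gf A₀ D k m := by
  unfold Gf
  have : (0:ℝ) ≤ ∑ j ∈ Finset.Ico m k, (1:ℝ)/(j:ℝ) :=
    Finset.sum_nonneg fun j _ => by positivity
  nlinarith

lemma Gf_step {A₀ D : ℝ} {n : ℕ} (h : n + 1 < k) :
    Gf A₀ D k (n+1) = Gf A₀ D k (n+2) + 4*D*(1/((n:ℝ)+1)) := by
  unfold Gf
  rw [Finset.sum_eq_sum_Ico_succ_bot h (fun j => (1:ℝ)/(j:ℝ))]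
  push_cast
  ring



lemma peel_main (D : ℝ) (hD : 0 ≤ D) (hdiam : ∀ x y : M, dist x y ≤ D)
    (T : ℕ) (σ : ℕ → M) (init : Fin k → M) (A₀ : ℝ) (hA₀ : 0 ≤ A₀) :
    ∀ (n : ℕ) (R : Finset (Fin k)) (s : Fin k → ℕ → M),
      R.card = n + 1 → Serves T σ init s →
      (∑ q ∈ R, serverCost T s q) ≤ ((n:ℝ) + 1) * Gf A₀ D k (n+1) →
      ∃ s', Serves T σ init s' ∧
        (∀ q, q ∉ R → serverCost T s' q = serverCost T s q) ∧
        (∀ q ∈ R, serverCost T s' q ≤ Gf A₀ D k 1 + D) ∧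
        (∑ q ∈ R, serverCost T s' q) ≤ (∑ q ∈ R, serverCost T s q) + 2*D*(n:ℝ) := by
  intro n
  induction n with
  | zero =>
    intro R s hcard hserves hsum
    obtain ⟨p, rfl⟩ := Finset.card_eq_one.mp hcard
    refine ⟨s, hserves, fun q _ => rfl, ?_, by norm_num⟩
    intro q hq
    rw [Finset.mem_singleton] at hq
    subst hq
    rw [Finset.sum_singleton] at hsum
    have h1 : Gf A₀ D k (0+1) ≤ Gf A₀ D k 1 := le_rfl
    push_cast at hsum
    linarith
  | succ n ih =>
    intro R s hcard hserves hsum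
    have hRne : R.Nonempty := Finset.card_pos.mp (by rw [hcard]; omega)
    obtain ⟨p, hp, hpmax⟩ := Finset.exists_max_image R (serverCost T s) hRne
    have hkm : n + 2 ≤ k := by
      have h := Finset.card_le_univ R
      rw [hcard, Fintype.card_fin] at h
      omega
    have hlt : n + 1 < k := by omega
    have hn2pos : (0:ℝ) < (n:ℝ) + 2 := by positivity
    have hn1pos : (0:ℝ) < (n:ℝ) + 1 := by positivity
    set G := Gf A₀ D k (n+2) with hGdef
    have hsum' : (∑ q ∈ R, serverCost T s q) ≤ ((n:ℝ) + 2) * G := by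
      have := hsum
      push_cast at this ⊢
      convert this using 2 <;> push_cast <;> ring_nf
    have hGstep : Gf A₀ D k (n+1) = G + 4*D*(1/((n:ℝ)+1)) := Gf_step hlt
    have hG1 : G ≤ Gf A₀ D k 1 := Gf_le_one hD (by omega)
    have hmaxS : (∑ q ∈ R, serverCost T s q) ≤ ((n:ℝ)+2) * serverCost T s p := by
      have h := Finset.sum_le_card_nsmul R (serverCost T s) (serverCost T s p)
        (fun x hx => hpmax x hx)
      rw [hcard] at h
      rw [nsmul_eq_mul] at h
      push_cast at h
      linarith
    have hcard' : (R.erase p).card = n + 1 := by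
      rw [Finset.card_erase_of_mem hp, hcard]
      omega
    have hcancel : ((n:ℝ)+1) * (4*D*(1/((n:ℝ)+1))) = 4*D := by
      field_simp
    by_cases hcp : serverCost T s p ≤ G + D
    · -- Case A : no swap needed, peel p directly
      have hsumA : (∑ q ∈ R.erase p, serverCost T s q) ≤ ((n:ℝ)+1) * Gf A₀ D k (n+1) := by
        rw [Finset.sum_erase_eq_sub hp]
        have key : (∑ q ∈ R, serverCost T s q) - serverCost T s p ≤ ((n:ℝ)+1) * G := by
          have h1 : ((n:ℝ)+2) * ((∑ q ∈ R, serverCost T s q) - serverCost T s p)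
              ≤ ((n:ℝ)+1) * (∑ q ∈ R, serverCost T s q) := by nlinarith [hmaxS]
          have h2 : ((n:ℝ)+1) * (∑ q ∈ R, serverCost T s q)
              ≤ ((n:ℝ)+1) * (((n:ℝ)+2) * G) :=
            mul_le_mul_of_nonneg_left hsum' (by linarith)
          have h3 : ((n:ℝ)+2) * ((∑ q ∈ R, serverCost T s q) - serverCost T s p)
              ≤ ((n:ℝ)+2) * (((n:ℝ)+1) * G) := by nlinarith [h1, h2]
          exact le_of_mul_le_mul_left h3 hn2pos
        rw [hGstep]
        have : (0:ℝ) ≤ 4*D*(1/((n:ℝ)+1)) := by positivity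
        nlinarith [key]
      obtain ⟨s', h1, h2, h3, h4⟩ := ih (R.erase p) s hcard' hserves hsumA
      refine ⟨s', h1, ?_, ?_, ?_⟩
      · intro q hq
        exact h2 q (fun hq' => hq (Finset.mem_of_mem_erase hq'))
      · intro q hq
        by_cases hqp : q = p
        · subst hqp
          rw [h2 q (Finset.notMem_erase q R)]
          linarith
        · exact h3 q (Finset.mem_erase.mpr ⟨hqp, hq⟩)
      · have e1 : ∑ q ∈ R.erase p, serverCost T s' q + serverCost T s' p
            = ∑ q ∈ R, serverCost T s' q := Finset.sum_erase_add R _ hp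
        have e2 : ∑ q ∈ R.erase p, serverCost T s q + serverCost T s p
            = ∑ q ∈ R, serverCost T s q := Finset.sum_erase_add R _ hp
        have e3 : serverCost T s' p = serverCost T s p := h2 p (Finset.notMem_erase p R)
        push_cast
        linarith [h4]
    · -- Case B : swap p (max) with w (min) at a suitable time
      push_neg at hcp
      obtain ⟨w, hw, hwmin⟩ := Finset.exists_min_image R (serverCost T s) hRne
      have hwle : serverCost T s w ≤ G := by
        have h := Finset.card_nsmul_le_sum R (serverCost T s) (serverCost T s w)
          (fun x hx => hwmin x hx)
        rw [hcard, nsmul_eq_mul] at h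
        push_cast at h
        nlinarith [hsum']
      have hpw : p ≠ w := by
        intro h
        rw [h] at hcp
        linarith
      set f : ℕ → ℝ := fun c => serverCost T (swapAt s p w c) p with hfdef
      set F : Finset ℕ := (Finset.Icc 1 (T+1)).filter (fun t => f t ≤ G + D) with hFdef
      have h1F : 1 ∈ F := by
        rw [hFdef, Finset.mem_filter]
        refine ⟨Finset.mem_Icc.mpr ⟨le_rfl, by omega⟩, ?_⟩
        have := swapAt_cost_one (s := s) (p := p) (w := w) hD hdiam (T := T)
        simp only [hfdef]
        linarith
      have hFne : F.Nonempty := ⟨1, h1F⟩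
      set t₀ := F.max' hFne with ht₀def
      have htF : t₀ ∈ F := F.max'_mem hFne
      rw [hFdef, Finset.mem_filter, Finset.mem_Icc] at htF
      obtain ⟨⟨ht1, htT1⟩, htle⟩ := htF
      have htT : t₀ ≤ T := by
        rcases Nat.lt_or_ge t₀ (T+1) with h | h
        · omega
        · exfalso
          have : t₀ = T + 1 := by omega
          rw [this] at htle
          have : f (T+1) = serverCost T s p := swapAt_cost_top
          linarith
      have hnext : ¬ (f (t₀+1) ≤ G + D) := by
        intro hcon
        have hmem : t₀ + 1 ∈ F := by
          rw [hFdef, Finset.mem_filter]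
          exact ⟨Finset.mem_Icc.mpr ⟨by omega, by omega⟩, hcon⟩
        have := F.le_max' _ hmem
        omega
      push_neg at hnext
      have hstep : f (t₀+1) ≤ f t₀ + 2*D := swapAt_cost_step hD hdiam ht1
      have hlow : G - D ≤ f t₀ := by linarith
      set s₂ := swapAt s p w t₀ with hs₂def
      have hS₂ : Serves T σ init s₂ := serves_swapAt hserves p w ht1
      have hc₂p : serverCost T s₂ p = f t₀ := rfl
      have hpair : serverCost T s₂ p + serverCost T s₂ w
          ≤ serverCost T s p + serverCost T s w + 2*D :=
        swapAt_cost_pair hD hdiam ht1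
      have hother : ∀ q, q ≠ p → q ≠ w → serverCost T s₂ q = serverCost T s q :=
        fun q hqp hqw => swapAt_cost_other hqp hqw
      have hsub : ({p, w} : Finset (Fin k)) ⊆ R := by
        intro x hx
        rcases Finset.mem_insert.mp hx with h | h
        · rwa [h]
        · rw [Finset.mem_singleton] at h; rwa [h]
      have hsum₂ : (∑ q ∈ R, serverCost T s₂ q) ≤ (∑ q ∈ R, serverCost T s q) + 2*D := by
        have hzero : ∀ x ∈ R, x ∉ ({p, w} : Finset (Fin k)) →
            serverCost T s₂ x - serverCost T s x = 0 := by
          intro x _ hx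
          simp only [Finset.mem_insert, Finset.mem_singleton] at hx
          push_neg at hx
          rw [hother x hx.1 hx.2, sub_self]
        have e1 : ∑ q ∈ ({p, w} : Finset (Fin k)), (serverCost T s₂ q - serverCost T s q)
            = ∑ q ∈ R, (serverCost T s₂ q - serverCost T s q) :=
          Finset.sum_subset hsub hzero
        rw [Finset.sum_pair hpw] at e1
        rw [Finset.sum_sub_distrib] at e1
        linarith [e1, hpair]
      have hsumB : (∑ q ∈ R.erase p, serverCost T s₂ q) ≤ ((n:ℝ)+1) * Gf A₀ D k (n+1) := by
        rw [Finset.sum_erase_eq_sub hp, hc₂p]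
        rw [hGstep]
        nlinarith [hsum₂, hsum', hlow, hcancel]
      obtain ⟨s', h1, h2, h3, h4⟩ := ih (R.erase p) s₂ hcard' hS₂ hsumB
      refine ⟨s', h1, ?_, ?_, ?_⟩
      · intro q hq
        have hq' : q ∉ R.erase p := fun hq' => hq (Finset.mem_of_mem_erase hq')
        rw [h2 q hq']
        exact hother q (fun h => hq (h ▸ hp)) (fun h => hq (h ▸ hw))
      · intro q hq
        by_cases hqp : q = p
        · subst hqp
          rw [h2 q (Finset.notMem_erase q R), hc₂p]
          linarith
        · exact h3 q (Finset.mem_erase.mpr ⟨hqp, hq⟩)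
      · have e1 : ∑ q ∈ R.erase p, serverCost T s' q + serverCost T s' p
            = ∑ q ∈ R, serverCost T s' q := Finset.sum_erase_add R _ hp
        have e2 : ∑ q ∈ R.erase p, serverCost T s₂ q + serverCost T s₂ p
            = ∑ q ∈ R, serverCost T s₂ q := Finset.sum_erase_add R _ hp
        have e3 : serverCost T s' p = serverCost T s₂ p := h2 p (Finset.notMem_erase p R)
        push_cast
        linarith [h4, hsum₂]

end OfflineFairAux

/-- Offline fair transformation: any schedule of total cost `C` can be turned into a
schedule with the same initial positions, total cost at most
`C + 2·D·k·(1 + log_b k)`, in which every server pays at most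
`(1+ε)·C/k + 2(1+ε)·D·(3/2 + log_b k)`, where `b = (2+2ε)/(2+ε)`. -/
theorem offline_fair_transformation
    {M : Type*} [MetricSpace M] (D : ℝ) (hD : 0 ≤ D)
    (hdiam : ∀ x y : M, dist x y ≤ D)
    (k : ℕ) (hk : 1 ≤ k) (T : ℕ) (σ : ℕ → M) (init : Fin k → M)
    (ε : ℝ) (hε : 0 < ε)
    (s : Fin k → ℕ → M) (hS : Serves T σ init s) :
    ∃ s' : Fin k → ℕ → M, Serves T σ init s' ∧
      totalCost T s' ≤ totalCost T s
        + 2 * D * k * (1 + Real.logb ((2 + 2 * ε) / (2 + ε)) k) ∧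
      ∀ i : Fin k, serverCost T s' i ≤
        (1 + ε) * totalCost T s / k
          + 2 * (1 + ε) * D * (3 / 2 + Real.logb ((2 + 2 * ε) / (2 + ε)) k) := by
  classical
  have hkR : (0:ℝ) < (k:ℝ) := by exact_mod_cast Nat.lt_of_lt_of_le Nat.zero_lt_one hk
  obtain ⟨n, hn⟩ : ∃ n, k = n + 1 := ⟨k - 1, by omega⟩
  have hC₀ : 0 ≤ totalCost T s := OfflineFairAux.totalCost_nonneg T s
  set lam := Real.logb ((2 + 2 * ε) / (2 + ε)) (k:ℝ) with hlam
  have h2ε : (0:ℝ) < 2 + ε := by linarith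
  have hb1 : 1 < (2 + 2*ε)/(2 + ε) := by
    rw [lt_div_iff₀ h2ε]; linarith
  have hb1' : 1 < (2 + 2 * ε) / (2 + ε) := hb1
  have hlam0 : 0 ≤ lam := by
    rw [hlam]
    exact Real.logb_nonneg hb1' (by exact_mod_cast hk)
  have hA₀ : 0 ≤ totalCost T s / (k:ℝ) := by positivity
  have hcard : (Finset.univ : Finset (Fin k)).card = n + 1 := by
    rw [Finset.card_univ, Fintype.card_fin, hn]
  have hIco : Finset.Ico (n+1) k = ∅ := by rw [hn]; exact Finset.Ico_self _
  have hinv : (∑ q ∈ Finset.univ, serverCost T s q)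
      ≤ ((n:ℝ) + 1) * OfflineFairAux.Gf (totalCost T s / (k:ℝ)) D k (n+1) := by
    unfold OfflineFairAux.Gf
    rw [hIco]
    simp only [Finset.sum_empty, mul_zero, add_zero]
    have hkr : ((n:ℝ)+1) = (k:ℝ) := by rw [hn]; push_cast; ring
    rw [hkr, mul_comm, div_mul_cancel₀ _ (ne_of_gt hkR)]
    exact le_of_eq rfl
  obtain ⟨s', h1, h2, h3, h4⟩ :=
    OfflineFairAux.peel_main D hD hdiam T σ init (totalCost T s / (k:ℝ)) hA₀
      n Finset.univ s hcard hS hinv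
  refine ⟨s', h1, ?_, ?_⟩
  · have e : totalCost T s' = ∑ q ∈ Finset.univ, serverCost T s' q := rfl
    have e2 : totalCost T s = ∑ q ∈ Finset.univ, serverCost T s q := rfl
    have hnk : (n:ℝ) ≤ (k:ℝ) := by exact_mod_cast (by omega : n ≤ k)
    have t1 : 2*D*(n:ℝ) ≤ 2*D*(k:ℝ) := by nlinarith
    have t2 : 2*D*(k:ℝ) ≤ 2*D*(k:ℝ)*(1+lam) := by
      nlinarith [mul_nonneg (mul_nonneg (mul_nonneg (by norm_num : (0:ℝ) ≤ 2) hD) hkR.le) hlam0]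
    rw [e, e2]
    linarith [h4]
  · intro i
    have h3i := h3 i (Finset.mem_univ i)
    unfold OfflineFairAux.Gf at h3i
    rcases Nat.lt_or_ge k 2 with hk1 | hk2
    · -- k = 1
      have hk1' : k = 1 := by omega
      subst hk1'
      have hlam1 : lam = 0 := by
        rw [hlam]
        norm_num
      rw [hlam1]
      simp only [Finset.Ico_self, Finset.sum_empty, mul_zero, add_zero] at h3i
      have hεC : 0 ≤ ε * totalCost T s := mul_nonneg hε.le hC₀
      have hεD : 0 ≤ ε * D := mul_nonneg hε.le hD
      simp only [Nat.cast_one, div_one] at h3i ⊢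
      nlinarith [h3i]
    · -- k ≥ 2
      have hk2R : (2:ℝ) ≤ (k:ℝ) := by exact_mod_cast hk2
      have hlogk : Real.log 2 ≤ Real.log (k:ℝ) := Real.log_le_log (by norm_num) hk2R
      have hlogk0 : 0 ≤ Real.log (k:ℝ) :=
        le_trans (Real.log_nonneg (by norm_num)) hlogk
      have hlog2 := Real.log_two_gt_d9
      set S := ∑ j ∈ Finset.Ico 1 k, (1:ℝ)/(j:ℝ) with hSdef
      have hHS : S ≤ 1 + Real.log (k:ℝ) := by
        rw [hSdef]
        have hk1 : k - 1 + 1 = k := by omega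
        have hIcc : Finset.Ico 1 k = Finset.Icc 1 (k-1) := by
          rw [← Finset.Ico_add_one_right_eq_Icc]
          congr 1
          omega
        rw [hIcc]
        have hh := OfflineFairAux.harmonic_le (k-1) (by omega)
        have hcast : (((k-1:ℕ)):ℝ) ≤ (k:ℝ) := by exact_mod_cast Nat.sub_le k 1
        have hpos : (0:ℝ) < (((k-1:ℕ)):ℝ) := by
          have hge : 1 ≤ k - 1 := by omega
          exact_mod_cast Nat.lt_of_lt_of_le Nat.zero_lt_one hge
        have hmono := Real.log_le_log hpos hcast
        linarith
      have hbpos : (0:ℝ) < (2+2*ε)/(2+ε) := by positivity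
      have hlogb_pos : 0 < Real.log ((2+2*ε)/(2+ε)) := Real.log_pos hb1
      have hlogb_le : Real.log ((2+2*ε)/(2+ε)) ≤ ε/(2+ε) := by
        have h := Real.log_le_sub_one_of_pos hbpos
        have e : (2+2*ε)/(2+ε) - 1 = ε/(2+ε) := by
          field_simp
          ring
        linarith
      have hεd : (0:ℝ) < ε/(2+ε) := by positivity
      have hlam_lb : Real.log (k:ℝ) * ((2+ε)/ε) ≤ lam := by
        have e1 : Real.log (k:ℝ) / (ε/(2+ε)) ≤ Real.log (k:ℝ) / Real.log ((2+2*ε)/(2+ε)) :=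
          div_le_div_of_nonneg_left hlogk0 hlogb_pos hlogb_le
        have e2 : Real.log (k:ℝ) / (ε/(2+ε)) = Real.log (k:ℝ) * ((2+ε)/ε) := by
          field_simp
        rw [hlam, Real.logb]
        calc Real.log (k:ℝ) * ((2+ε)/ε) = Real.log (k:ℝ) / (ε/(2+ε)) := e2.symm
          _ ≤ Real.log (k:ℝ) / Real.log ((2+2*ε)/(2+ε)) := e1
      have hcoef : (5:ℝ) ≤ (1+ε)*((2+ε)/ε) := by
        have e : (1+ε)*((2+ε)/ε) = ((1+ε)*(2+ε))/ε := by ring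
        rw [e, le_div_iff₀ hε]
        nlinarith [sq_nonneg (ε-1)]
      have h5 : 5*Real.log (k:ℝ) ≤ (1+ε)*lam := by
        calc 5*Real.log (k:ℝ) ≤ ((1+ε)*((2+ε)/ε)) * Real.log (k:ℝ) :=
              mul_le_mul_of_nonneg_right hcoef hlogk0
          _ = (1+ε) * (Real.log (k:ℝ) * ((2+ε)/ε)) := by ring
          _ ≤ (1+ε)*lam := mul_le_mul_of_nonneg_left hlam_lb (by linarith)
      have e1 : 4*D*S ≤ 4*D*(1+Real.log (k:ℝ)) :=
        mul_le_mul_of_nonneg_left hHS (by linarith)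
      have e2 : 2*D*(5*Real.log (k:ℝ)) ≤ 2*D*((1+ε)*lam) :=
        mul_le_mul_of_nonneg_left h5 (by linarith)
      have e3 : (1:ℝ) ≤ 3*Real.log (k:ℝ) := by nlinarith
      have e4 : 2*D*(1:ℝ) ≤ 2*D*(3*Real.log (k:ℝ)) :=
        mul_le_mul_of_nonneg_left e3 (by linarith)
      have e5 : 0 ≤ ε * (totalCost T s / (k:ℝ)) := mul_nonneg hε.le hA₀
      have e6 : 0 ≤ ε * D := mul_nonneg hε.le hD
      rw [mul_div_assoc]
      nlinarith [h3i, e1, e2, e4, e5, e6]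
end

section
/- Let n ≥ 1 be an integer, c ≥ 0 a real, and let A_1,…,A_n and B_1,…,B_n be real numbers with 0 ≤ A_i ≤ c and 0 ≤ B_i ≤ c for all i. Then there exists an index z ∈ {0,1,…,n} such that |(Σ_{i=1}^{z} A_i + Σ_{i=z+1}^{n} B_i) − (Σ_{i=1}^{z} B_i + Σ_{i=z+1}^{n} A_i)| ≤ c. -/
/-- Discrete IVT, half: if `f 0 ≤ 0 ≤ f n` and steps are bounded by `2c`, some `|f z| ≤ c`. -/
lemma key_half (n : ℕ) (c : ℝ) (hc : 0 ≤ c) (f : ℕ → ℝ) (h0 : f 0 ≤ 0) (hn : 0 ≤ f n)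
    (hstep : ∀ z < n, |f (z + 1) - f z| ≤ 2 * c) : ∃ z ≤ n, |f z| ≤ c := by
  classical
  have hex : ∃ z, z ≤ n ∧ 0 ≤ f z := ⟨n, le_refl n, hn⟩
  have hzn : Nat.find hex ≤ n := (Nat.find_spec hex).1
  have hz : 0 ≤ f (Nat.find hex) := (Nat.find_spec hex).2
  have hmin : ∀ m < Nat.find hex, ¬ (m ≤ n ∧ 0 ≤ f m) := fun m h => Nat.find_min hex h
  cases hz0 : Nat.find hex with
  | zero =>
    rw [hz0] at hz
    exact ⟨0, Nat.zero_le n, by rw [abs_of_nonpos h0]; linarith⟩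
  | succ m =>
    rw [hz0] at hzn hz hmin
    have hm : ¬ (m ≤ n ∧ 0 ≤ f m) := hmin m (by omega)
    have hmn : m < n := by omega
    have hfm : f m < 0 := by
      by_contra hcon
      exact hm ⟨le_of_lt hmn, le_of_not_gt hcon⟩
    rcases le_or_gt (f (m+1)) c with hle | hgt
    · exact ⟨m + 1, hzn, by rwa [abs_of_nonneg hz]⟩
    · have hs := hstep m hmn
      have : f (m+1) - f m ≤ 2 * c := (abs_le.mp hs).2
      refine ⟨m, le_of_lt hmn, ?_⟩
      rw [abs_of_nonpos (le_of_lt hfm)]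
      linarith

/-- Discrete IVT: if `f n = -f 0` and steps are bounded by `2c`, some `|f z| ≤ c`. -/
lemma key_discIVT (n : ℕ) (c : ℝ) (hc : 0 ≤ c) (f : ℕ → ℝ) (h0 : f n = - f 0)
    (hstep : ∀ z < n, |f (z + 1) - f z| ≤ 2 * c) : ∃ z ≤ n, |f z| ≤ c := by
  rcases le_or_gt (f 0) 0 with h | h
  · exact key_half n c hc f h (by rw [h0]; linarith) hstep
  · obtain ⟨z, hzn, hz⟩ := key_half n c hc (fun z => - f z) (by simpa using le_of_lt h)
      (by simp [h0]; linarith)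
      (fun z hzn => by
        have := hstep z hzn
        rw [← abs_neg] at this
        convert this using 2
        ring)
    exact ⟨z, hzn, by rwa [abs_neg] at hz⟩

/-- Balancing lemma: for two sequences `A`, `B` of reals in `[0, c]` of length `n`
there is a split index `z ∈ {0,…,n}` such that swapping the suffixes after `z`
balances the two totals up to an additive `c`. -/
theorem exists_balanced_split (n : ℕ) (hn : 1 ≤ n) (c : ℝ) (hc : 0 ≤ c)
    (A B : ℕ → ℝ)
    (hA : ∀ i ∈ Finset.Icc 1 n, 0 ≤ A i ∧ A i ≤ c)
    (hB : ∀ i ∈ Finset.Icc 1 n, 0 ≤ B i ∧ B i ≤ c) :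
    ∃ z ≤ n,
      |(∑ i ∈ Finset.Icc 1 z, A i + ∑ i ∈ Finset.Icc (z + 1) n, B i)
        - (∑ i ∈ Finset.Icc 1 z, B i + ∑ i ∈ Finset.Icc (z + 1) n, A i)| ≤ c := by
  set f : ℕ → ℝ := fun z =>
    (∑ i ∈ Finset.Icc 1 z, A i + ∑ i ∈ Finset.Icc (z + 1) n, B i)
      - (∑ i ∈ Finset.Icc 1 z, B i + ∑ i ∈ Finset.Icc (z + 1) n, A i) with hf
  have h0 : f n = - f 0 := by
    simp only [hf]
    rw [Finset.Icc_eq_empty (by omega : ¬ n + 1 ≤ n)]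
    rw [Finset.Icc_eq_empty (by omega : ¬ (1:ℕ) ≤ 0)]
    simp
    try ring
  have hstep : ∀ z < n, |f (z + 1) - f z| ≤ 2 * c := by
    intro z hz
    have h1 : Finset.Icc 1 (z + 1) = insert (z + 1) (Finset.Icc 1 z) := by
      ext x; simp; omega
    have h2 : Finset.Icc (z + 1) n = insert (z + 1) (Finset.Icc (z + 2) n) := by
      ext x; simp; omega
    have hni1 : z + 1 ∉ Finset.Icc 1 z := by simp
    have hni2 : z + 1 ∉ Finset.Icc (z + 2) n := by simp
    have hfv : f (z + 1) - f z = 2 * (A (z + 1) - B (z + 1)) := by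
      simp only [hf, h1, h2, Finset.sum_insert hni1, Finset.sum_insert hni2]
      ring
    rw [hfv]
    have hAz := hA (z + 1) (by simp; omega)
    have hBz := hB (z + 1) (by simp; omega)
    rw [abs_mul, abs_two]
    have : |A (z + 1) - B (z + 1)| ≤ c := abs_sub_le_of_nonneg_of_le hAz.1 hAz.2 hBz.1 hBz.2
    linarith
  exact key_discIVT n c hc f h0 hstep
end

section
/- Let n ≥ 1 be an integer, c ≥ 0 a real, and let A_1,…,A_n and B_1,…,B_n be real numbers with 0 ≤ A_i ≤ c and 0 ≤ B_i ≤ c for all i. Then there exists an index z ∈ {0,1,…,n} such that both Σ_{i=1}^{z} A_i + Σ_{i=z+1}^{n} B_i ≤ (Σ_{i=1}^{n} A_i + Σ_{i=1}^{n} B_i)/2 + c/2 and Σ_{i=1}^{z} B_i + Σ_{i=z+1}^{n} A_i ≤ (Σ_{i=1}^{n} A_i + Σ_{i=1}^{n} B_i)/2 + c/2. -/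
/-- Discrete IVT: if `h 0 ≤ 0 ≤ h n` and consecutive steps are at most `c`,
then some `z ≤ n` has `|h z| ≤ c/2`. -/
lemma discrete_ivt (n : ℕ) (c : ℝ) (hc : 0 ≤ c) (h : ℕ → ℝ)
    (h0 : h 0 ≤ 0) (hnn : 0 ≤ h n)
    (hstep : ∀ z < n, |h (z + 1) - h z| ≤ c) :
    ∃ z ≤ n, |h z| ≤ c / 2 := by
  have hex : ∃ z, z ≤ n ∧ 0 ≤ h z := ⟨n, le_rfl, hnn⟩
  classical
  let z := Nat.find hex
  obtain ⟨hzn, hz0⟩ := Nat.find_spec hex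
  cases' Nat.eq_zero_or_pos z with hz hz
  · refine ⟨z, hzn, ?_⟩
    have : h z = 0 := le_antisymm (hz ▸ h0) hz0
    rw [this, abs_zero]; linarith
  · obtain ⟨m, hm⟩ : ∃ m, z = m + 1 := ⟨z - 1, (Nat.succ_pred_eq_of_pos hz).symm⟩
    have hmn : m < n := by omega
    have hmneg : h m < 0 := by
      by_contra hcon
      push_neg at hcon
      have := Nat.find_min hex (m := m) (by omega)
      push_neg at this
      exact absurd hcon (not_le.mpr (this (by omega)))
    have hstepm := hstep m hmn
    rw [abs_le] at hstepm
    rw [← hm] at hstepm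
    by_cases hzc : h z ≤ c / 2
    · exact ⟨z, hzn, abs_le.mpr ⟨by linarith, hzc⟩⟩
    · exact ⟨m, by omega, abs_le.mpr ⟨by linarith, by linarith⟩⟩

/-- Swapping lemma: for two sequences `A`, `B` of reals in `[0, c]` of length `n`
there is a split index `z ∈ {0,…,n}` such that after swapping the suffixes beyond `z`,
each of the two resulting totals is at most the average of the two original totals
plus `c/2`. -/
theorem exists_balanced_swap (n : ℕ) (hn : 1 ≤ n) (c : ℝ) (hc : 0 ≤ c)
    (A B : ℕ → ℝ)
    (hA : ∀ i ∈ Finset.Icc 1 n, 0 ≤ A i ∧ A i ≤ c)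
    (hB : ∀ i ∈ Finset.Icc 1 n, 0 ≤ B i ∧ B i ≤ c) :
    ∃ z ≤ n,
      (∑ i ∈ Finset.Icc 1 z, A i + ∑ i ∈ Finset.Icc (z + 1) n, B i ≤
        (∑ i ∈ Finset.Icc 1 n, A i + ∑ i ∈ Finset.Icc 1 n, B i) / 2 + c / 2) ∧
      (∑ i ∈ Finset.Icc 1 z, B i + ∑ i ∈ Finset.Icc (z + 1) n, A i ≤
        (∑ i ∈ Finset.Icc 1 n, A i + ∑ i ∈ Finset.Icc 1 n, B i) / 2 + c / 2) := by
  classical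
  set T : ℝ := ∑ i ∈ Finset.Icc 1 n, A i + ∑ i ∈ Finset.Icc 1 n, B i with hT
  set f : ℕ → ℝ := fun z => ∑ i ∈ Finset.Icc 1 z, A i + ∑ i ∈ Finset.Icc (z + 1) n, B i
    with hf
  clear_value T f
  -- split identity
  have split : ∀ (F : ℕ → ℝ) (z : ℕ), z ≤ n →
      ∑ i ∈ Finset.Icc 1 z, F i + ∑ i ∈ Finset.Icc (z + 1) n, F i
        = ∑ i ∈ Finset.Icc 1 n, F i := by
    intro F z hz
    rw [show (1 : ℕ) = 0 + 1 by rfl, Finset.Icc_add_one_left_eq_Ioc, Finset.Icc_add_one_left_eq_Ioc, Nat.zero_add, Finset.Icc_add_one_left_eq_Ioc]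
    exact Finset.sum_Ioc_consecutive F (Nat.zero_le z) hz
  have hsum : ∀ z ≤ n,
      f z + (∑ i ∈ Finset.Icc 1 z, B i + ∑ i ∈ Finset.Icc (z + 1) n, A i) = T := by
    intro z hz
    have h1 := split A z hz
    have h2 := split B z hz
    simp only [hf, hT]
    linarith
  have hf0 : f 0 = ∑ i ∈ Finset.Icc 1 n, B i := by
    simp [hf]
  have hfn : f n = ∑ i ∈ Finset.Icc 1 n, A i := by
    simp [hf, Finset.Icc_eq_empty_of_lt (Nat.lt_succ_self n)]
  -- step bound for h z := f z - T/2
  have hstep : ∀ z < n, |(f (z + 1) - T / 2) - (f z - T / 2)| ≤ c := by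
    intro z hz
    have hz1 : z + 1 ∈ Finset.Icc 1 n := by simp; omega
    have e1 : ∑ i ∈ Finset.Icc 1 (z + 1), A i = ∑ i ∈ Finset.Icc 1 z, A i + A (z + 1) :=
      Finset.sum_Icc_succ_top (by omega) A
    have e2 : ∑ i ∈ Finset.Icc (z + 1) n, B i
        = B (z + 1) + ∑ i ∈ Finset.Icc (z + 2) n, B i := by
      rw [Finset.Icc_add_one_left_eq_Ioc, show z + 2 = (z + 1) + 1 by rfl, Finset.Icc_add_one_left_eq_Ioc,
        ← Finset.sum_Ioc_consecutive B (Nat.le_succ z) hz, ← Finset.Icc_add_one_left_eq_Ioc,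
        Nat.succ_eq_add_one, Finset.Icc_self, Finset.sum_singleton]
    have hdiff : (f (z + 1) - T / 2) - (f z - T / 2) = A (z + 1) - B (z + 1) := by
      simp only [hf]
      rw [e1]
      rw [show ∑ i ∈ Finset.Icc (z + 1 + 1) n, B i = ∑ i ∈ Finset.Icc (z + 2) n, B i by rfl]
      linarith [e2]
    rw [hdiff, abs_le]
    obtain ⟨ha1, ha2⟩ := hA _ hz1
    obtain ⟨hb1, hb2⟩ := hB _ hz1
    constructor <;> linarith
  -- apply discrete IVT to h or -h
  have key : ∃ z ≤ n, |f z - T / 2| ≤ c / 2 := by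
    by_cases hcmp : f 0 - T / 2 ≤ 0
    · refine discrete_ivt n c hc (fun z => f z - T / 2) hcmp ?_ hstep
      beta_reduce
      rw [hfn, hT]
      rw [hf0, hT] at hcmp
      linarith
    · push_neg at hcmp
      obtain ⟨z, hz, habs⟩ := discrete_ivt n c hc (fun z => -(f z - T / 2))
        (by beta_reduce; linarith)
        (by beta_reduce; rw [hfn, hT]; rw [hf0, hT] at hcmp; linarith)
        (fun z hz => by rw [show -(f (z+1) - T/2) - -(f z - T/2) = -((f (z+1) - T/2) - (f z - T/2)) by ring, abs_neg]; exact hstep z hz)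
      exact ⟨z, hz, by rwa [abs_neg] at habs⟩
  obtain ⟨z, hz, habs⟩ := key
  rw [abs_le] at habs
  refine ⟨z, hz, ?_, ?_⟩
  · have : f z ≤ T / 2 + c / 2 := by linarith [habs.2]
    simpa only [hf] using this
  · have hs := hsum z hz
    have : T - f z ≤ T / 2 + c / 2 := by linarith [habs.1]
    linarith [hs]
end

section
/- Let ε > 0, D ≥ 0, OPT ≥ 0 be reals, let k ≥ 1 be an integer (regarded as a real), let r be a real with 1 ≤ r ≤ k·log_b k where b = (2+2ε)/(2+ε), and set β = 2(1+ε)·D·(3/2 + log_b k). Suppose real numbers H, L, H' satisfy H' ≤ (3/2)·D + H/2 + L/2, L ≤ (OPT + 2(r−1)·D)/k, and H > (1+ε)·OPT/k + β. Then H' ≤ ((2+ε)/(2+2ε))·H. -/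
/-- One-round decrease bound for the offline swapping algorithm: if `H'` is bounded by
`(3/2)·D + H/2 + L/2`, the minimum cost `L` is at most the average
`(OPT + 2(r−1)·D)/k`, and the maximum cost `H` exceeds the fairness threshold
`(1+ε)·OPT/k + β` with `β = 2(1+ε)·D·(3/2 + log_b k)` and `b = (2+2ε)/(2+ε)`,
then `H' ≤ ((2+ε)/(2+2ε))·H`. -/
theorem swap_round_decrease (ε D OPT : ℝ) (hε : 0 < ε) (hD : 0 ≤ D) (hOPT : 0 ≤ OPT)
    (k : ℕ) (hk : 1 ≤ k) (r : ℝ) (hr1 : 1 ≤ r)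
    (hr2 : r ≤ (k : ℝ) * Real.logb ((2 + 2 * ε) / (2 + ε)) k)
    (H L H' : ℝ)
    (hH' : H' ≤ (3 / 2) * D + H / 2 + L / 2)
    (hL : L ≤ (OPT + 2 * (r - 1) * D) / k)
    (hH : H > (1 + ε) * OPT / k
      + 2 * (1 + ε) * D * (3 / 2 + Real.logb ((2 + 2 * ε) / (2 + ε)) k)) :
    H' ≤ ((2 + ε) / (2 + 2 * ε)) * H := by
  set c := Real.logb ((2 + 2 * ε) / (2 + ε)) k with hc
  have hkpos : (0:ℝ) < k := by exact_mod_cast Nat.lt_of_lt_of_le Nat.zero_lt_one hk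
  have hLc : L ≤ OPT / k + 2 * c * D := by
    have h1 : (r - 1) * D ≤ c * D * k := by nlinarith
    calc L ≤ (OPT + 2 * (r - 1) * D) / k := hL
      _ ≤ OPT / k + 2 * c * D := by
          rw [div_le_iff₀ hkpos]
          field_simp
          nlinarith
  have hHbig : (1 + ε) * (3 * D + L) < H := by
    rw [mul_div_assoc] at hH
    nlinarith [mul_le_mul_of_nonneg_left hLc (by linarith : (0:ℝ) ≤ 1 + ε)]
  have h2 : (0:ℝ) < 2 + 2 * ε := by linarith
  rw [div_mul_eq_mul_div, le_div_iff₀ h2]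
  nlinarith
end
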